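/- For every N ≥ 1, a > 0 and b ∈ ℝ, the partition function Z_N = Σ_{D ∈ 𝒟_N} N^{−|D|} exp(N(a m_N(D)²/2 + b m_N(D))) admits the integral representation Z_N = (N√a/(2π)) ∬_{ℝ²} Φ(x,y)^N dx dy, where Φ(x,y) = (x + e^{ay+b}) exp(−x²/2 − a y²/2). -/

import Mathlib

open MeasureTheory Real

/-- `D` is a monomer-dimer configuration on `Fin N`: a set of non-loop edges
(pairs of distinct vertices) that are pairwise disjoint, i.e. a partition into
pairs of a subset of the vertex set. -/
def IsMDConfig (N : ℕ) (D : Finset (Sym2 (Fin N))) : Prop :=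
  (∀ e ∈ D, ¬ e.IsDiag) ∧
    ∀ e ∈ D, ∀ f ∈ D, e ≠ f → ∀ v : Fin N, v ∈ e → v ∉ f

/-- The monomer density of a configuration. -/
noncomputable def monomerDensity (N : ℕ) (D : Finset (Sym2 (Fin N))) : ℝ :=
  ((N : ℝ) - 2 * D.card) / N

/-- The integrand of the two-dimensional integral representation. -/
noncomputable def Phi (a b x y : ℝ) : ℝ :=
  (x + Real.exp (a * y + b)) * Real.exp (-(x ^ 2 / 2) - a * y ^ 2 / 2)

section AuxLemmas
open Finset

lemma exp_quad_eq {b c : ℝ} (hb : b ≠ 0) (x : ℝ) :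
    rexp (-b * x ^ 2 + c * x) = rexp (c ^ 2 / (4 * b)) * rexp (-b * (x - c / (2 * b)) ^ 2) := by
  rw [← Real.exp_add]
  congr 1
  field_simp
  ring

lemma integrable_exp_quad {b : ℝ} (hb : 0 < b) (c : ℝ) :
    Integrable fun x : ℝ => rexp (-b * x ^ 2 + c * x) := by
  have : (fun x : ℝ => rexp (-b * x ^ 2 + c * x)) =
      fun x => rexp (c ^ 2 / (4 * b)) * rexp (-b * (x - c / (2 * b)) ^ 2) := by
    funext x; exact exp_quad_eq hb.ne' x
  rw [this]
  exact (((integrable_exp_neg_mul_sq hb).comp_sub_right (c / (2 * b)))).const_mul _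

lemma integral_exp_quad {b : ℝ} (hb : 0 < b) (c : ℝ) :
    ∫ x : ℝ, rexp (-b * x ^ 2 + c * x) = Real.sqrt (π / b) * rexp (c ^ 2 / (4 * b)) := by
  simp_rw [exp_quad_eq hb.ne']
  rw [MeasureTheory.integral_const_mul, integral_sub_right_eq_self
    (fun x => rexp (-b * x ^ 2)) (c / (2 * b)), integral_gaussian]
  ring

lemma pow_le_exp_of_nonneg' {x : ℝ} (hx : 0 ≤ x) (m : ℕ) :
    x ^ m ≤ m.factorial * rexp x := by
  have h1 : x ^ m / m.factorial ≤ rexp x := by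
    calc x ^ m / m.factorial ≤ ∑ i ∈ range (m + 1), x ^ i / i.factorial := by
          refine Finset.single_le_sum (f := fun i => x ^ i / (i.factorial : ℝ)) ?_
            (Finset.self_mem_range_succ m)
          intro i _
          positivity
      _ ≤ rexp x := Real.sum_le_exp_of_nonneg hx _
  rw [div_le_iff₀ (by positivity)] at h1
  linarith [h1]

lemma abs_exp_le (x : ℝ) : rexp |x| ≤ rexp x + rexp (-x) := by
  rcases abs_cases x with ⟨h, _⟩ | ⟨h, _⟩ <;> rw [h] <;>
    linarith [Real.exp_pos x, Real.exp_pos (-x)]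

lemma integrable_pow_mul_gauss {b : ℝ} (hb : 0 < b) (m : ℕ) :
    Integrable fun x : ℝ => x ^ m * rexp (-b * x ^ 2) := by
  have hg : Integrable fun x : ℝ =>
      (m.factorial : ℝ) * (rexp (-b * x ^ 2 + 1 * x) + rexp (-b * x ^ 2 + (-1) * x)) :=
    ((integrable_exp_quad hb 1).add (integrable_exp_quad hb (-1))).const_mul _
  refine hg.mono' ?_ (Filter.Eventually.of_forall fun x => ?_)
  · exact ((continuous_pow m).mul
      (Real.continuous_exp.comp (continuous_const.mul (continuous_pow 2)))).aestronglyMeasurable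
  · rw [Real.norm_eq_abs, abs_mul, abs_of_pos (exp_pos _), abs_pow]
    calc |x| ^ m * rexp (-b * x ^ 2)
        ≤ (m.factorial * rexp |x|) * rexp (-b * x ^ 2) :=
          mul_le_mul_of_nonneg_right (pow_le_exp_of_nonneg' (abs_nonneg x) m) (exp_pos _).le
      _ ≤ (m.factorial * (rexp x + rexp (-x))) * rexp (-b * x ^ 2) := by
          have h := abs_exp_le x
          have h0 : (0:ℝ) ≤ (m.factorial : ℝ) := Nat.cast_nonneg _
          have := mul_le_mul_of_nonneg_left h h0
          exact mul_le_mul_of_nonneg_right this (exp_pos _).le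
      _ = m.factorial * (rexp (-b * x ^ 2 + 1 * x) + rexp (-b * x ^ 2 + (-1) * x)) := by
          have e1 : rexp (-b * x ^ 2 + 1 * x) = rexp x * rexp (-b * x ^ 2) := by
            rw [← Real.exp_add]; ring_nf
          have e2 : rexp (-b * x ^ 2 + (-1) * x) = rexp (-x) * rexp (-b * x ^ 2) := by
            rw [← Real.exp_add]; ring_nf
          rw [e1, e2]; ring

open Nat in
lemma integral_even_pow_mul_gauss {b : ℝ} (hb : 0 < b) (k : ℕ) :
    ∫ x : ℝ, x ^ (2 * k) * rexp (-b * x ^ 2) =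
      Real.sqrt (π / b) * (2 * k - 1)‼ / (2 * b) ^ k := by
  induction k with
  | zero =>
    norm_num [Nat.doubleFactorial]
    rw [show (fun x : ℝ => rexp (-(b * x ^ 2))) = fun x : ℝ => rexp (-b * x ^ 2) by
      funext x; ring_nf, integral_gaussian]
  | succ k ih =>
    have hu : ∀ x : ℝ, HasDerivAt (fun x : ℝ => x ^ (2 * k + 1))
        ((2 * k + 1 : ℕ) * x ^ (2 * k)) x := by
      intro x
      simpa using hasDerivAt_pow (2 * k + 1) x
    have hv : ∀ x : ℝ, HasDerivAt (fun x : ℝ => rexp (-b * x ^ 2))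
        ((-2 * b * x) * rexp (-b * x ^ 2)) x := by
      intro x
      have h1 : HasDerivAt (fun x : ℝ => -b * x ^ 2) (-b * (2 * x)) x := by
        simpa using ((hasDerivAt_pow 2 x).const_mul (-b))
      simpa [mul_comm, mul_assoc, mul_left_comm] using h1.exp
    have huv' : Integrable ((fun x : ℝ => x ^ (2 * k + 1)) *
        (fun x : ℝ => (-2 * b * x) * rexp (-b * x ^ 2))) := by
      refine ((integrable_pow_mul_gauss hb (2 * k + 2)).const_mul (-2 * b)).congr
        (Filter.Eventually.of_forall fun x => ?_)
      simp only [Pi.mul_apply]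
      ring
    have hu'v : Integrable ((fun x : ℝ => ((2 * k + 1 : ℕ) : ℝ) * x ^ (2 * k)) *
        (fun x : ℝ => rexp (-b * x ^ 2))) := by
      refine ((integrable_pow_mul_gauss hb (2 * k)).const_mul ((2 * k + 1 : ℕ) : ℝ)).congr
        (Filter.Eventually.of_forall fun x => ?_)
      simp only [Pi.mul_apply]
      ring
    have huv : Integrable ((fun x : ℝ => x ^ (2 * k + 1)) *
        (fun x : ℝ => rexp (-b * x ^ 2))) := by
      refine (integrable_pow_mul_gauss hb (2 * k + 1)).congr
        (Filter.Eventually.of_forall fun x => ?_)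
      simp only [Pi.mul_apply]
    have key := integral_mul_deriv_eq_deriv_mul_of_integrable (fun x _ => hu x) (fun x _ => hv x) huv' hu'v huv
    have lhs_eq : ∫ x : ℝ, x ^ (2 * k + 1) * ((-2 * b * x) * rexp (-b * x ^ 2)) =
        (-2 * b) * ∫ x : ℝ, x ^ (2 * (k + 1)) * rexp (-b * x ^ 2) := by
      rw [← MeasureTheory.integral_const_mul]
      congr 1
      funext x
      ring
    have rhs_eq : ∫ x : ℝ, ((2 * k + 1 : ℕ) : ℝ) * x ^ (2 * k) * rexp (-b * x ^ 2) =
        ((2 * k + 1 : ℕ) : ℝ) * ∫ x : ℝ, x ^ (2 * k) * rexp (-b * x ^ 2) := by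
      rw [← MeasureTheory.integral_const_mul]
      congr 1
      funext x
      ring
    rw [lhs_eq, rhs_eq, ih] at key
    have h2b : (2 * b) ≠ 0 := by positivity
    have : ∫ x : ℝ, x ^ (2 * (k + 1)) * rexp (-b * x ^ 2) =
        ((2 * k + 1 : ℕ) : ℝ) * (Real.sqrt (π / b) * (2 * k - 1)‼ / (2 * b) ^ k) / (2 * b) := by
      field_simp at key ⊢
      linarith [key]
    rw [this]
    have hdf : ((2 * (k + 1) - 1)‼ : ℝ) = ((2 * k + 1 : ℕ) : ℝ) * ((2 * k - 1)‼ : ℝ) := by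
      have : 2 * (k + 1) - 1 = 2 * k + 1 := by omega
      rw [this]
      norm_cast
      exact Nat.doubleFactorial_add_one (2 * k)
    rw [hdf, pow_succ]
    field_simp

lemma integral_odd_pow_mul_gauss {b : ℝ} (k : ℕ) :
    ∫ x : ℝ, x ^ (2 * k + 1) * rexp (-b * x ^ 2) = 0 := by
  have h : ∫ x : ℝ, (-x) ^ (2 * k + 1) * rexp (-b * (-x) ^ 2) =
      ∫ x : ℝ, x ^ (2 * k + 1) * rexp (-b * x ^ 2) :=
    integral_neg_eq_self (fun x : ℝ => x ^ (2 * k + 1) * rexp (-b * x ^ 2)) volume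
  have h2 : (fun x : ℝ => (-x) ^ (2 * k + 1) * rexp (-b * (-x) ^ 2)) =
      fun x : ℝ => -(x ^ (2 * k + 1) * rexp (-b * x ^ 2)) := by
    funext x
    rw [Odd.neg_pow ⟨k, by ring⟩, neg_sq]
    ring
  rw [h2, MeasureTheory.integral_neg] at h
  linarith [h]


open Classical in
noncomputable def conf (N : ℕ) (V : Finset (Fin N)) (k : ℕ) : Finset (Finset (Sym2 (Fin N))) :=
  Finset.univ.filter (fun D => IsMDConfig N D ∧ D.card = k ∧ ∀ e ∈ D, ∀ v ∈ e, v ∈ V)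

open Classical in
lemma mem_conf {N : ℕ} {V : Finset (Fin N)} {k : ℕ} {D : Finset (Sym2 (Fin N))} :
    D ∈ conf N V k ↔ IsMDConfig N D ∧ D.card = k ∧ ∀ e ∈ D, ∀ v ∈ e, v ∈ V := by
  simp [conf]

open Nat in
lemma choose_df_identity (n k : ℕ) :
    (n + 2).choose (2 * k + 2) * (2 * k + 1)‼ =
      (n + 1).choose (2 * k + 2) * (2 * k + 1)‼ +
        (n + 1) * (n.choose (2 * k) * (2 * k - 1)‼) := by
  have hp : (n + 2).choose (2 * k + 2) =
      (n + 1).choose (2 * k + 1) + (n + 1).choose (2 * k + 2) :=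
    Nat.choose_succ_succ' (n + 1) (2 * k + 1)
  have h1 : (n + 1) * n.choose (2 * k) = (n + 1).choose (2 * k + 1) * (2 * k + 1) :=
    Nat.add_one_mul_choose_eq n (2 * k)
  have h2 : (2 * k + 1)‼ = (2 * k + 1) * (2 * k - 1)‼ := Nat.doubleFactorial_add_one (2 * k)
  calc (n + 2).choose (2 * k + 2) * (2 * k + 1)‼
      = (n + 1).choose (2 * k + 1) * (2 * k + 1)‼ + (n + 1).choose (2 * k + 2) * (2 * k + 1)‼ := by
        rw [hp, Nat.add_mul]
    _ = (n + 1).choose (2 * k + 2) * (2 * k + 1)‼ + (n + 1) * (n.choose (2 * k) * (2 * k - 1)‼) := by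
        rw [h2, ← Nat.mul_assoc, ← h1, Nat.mul_assoc]
        omega

open Nat in
lemma conf_card {N : ℕ} (n : ℕ) : ∀ (V : Finset (Fin N)), V.card = n → ∀ k,
    (conf N V k).card = n.choose (2 * k) * (2 * k - 1)‼ := by
  induction n using Nat.strong_induction_on with
  | _ n ih =>
  intro V hV k
  cases k with
  | zero =>
    have h1 : conf N V 0 = {∅} := by
      ext D
      rw [mem_conf, Finset.mem_singleton]
      constructor
      · rintro ⟨_, h, _⟩
        exact Finset.card_eq_zero.mp h
      · rintro rfl
        exact ⟨⟨by simp, by simp⟩, rfl, by simp⟩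
    rw [h1]
    simp [Nat.doubleFactorial]
  | succ k =>
    match n, hV with
    | 0, hV | 1, hV =>
      have h0 : conf N V (k + 1) = ∅ := by
        rw [Finset.eq_empty_iff_forall_notMem]
        intro D hD
        rw [mem_conf] at hD
        obtain ⟨⟨hdiag, _⟩, hcard, hsupp⟩ := hD
        have hne : D.Nonempty := Finset.card_pos.mp (by omega)
        obtain ⟨e, he⟩ := hne
        induction e using Sym2.inductionOn with
        | hf x y =>
          have hxy : x ≠ y := by
            intro h
            exact hdiag _ he (by rw [h]; exact Sym2.mk_isDiag_iff.mpr rfl)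
          have hx : x ∈ V := hsupp _ he x (Sym2.mem_mk_left x y)
          have hy : y ∈ V := hsupp _ he y (Sym2.mem_mk_right x y)
          have : 1 < V.card := Finset.one_lt_card.mpr ⟨x, hx, y, hy, hxy⟩
          omega
      rw [h0]
      have : 2 * (k + 1) - 1 = 2 * k + 1 := by omega
      rw [Finset.card_empty, Nat.choose_eq_zero_of_lt (by omega)]
      simp
    | (n + 2), hV =>
      have hVne : V.Nonempty := Finset.card_pos.mp (by omega)
      obtain ⟨v, hv⟩ := hVne
      classical
      -- split according to whether `v` is covered
      have hsplit : (conf N V (k + 1)).card =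
          ((conf N V (k + 1)).filter (fun D => ∀ e ∈ D, v ∉ e)).card +
          ((conf N V (k + 1)).filter (fun D => ¬ ∀ e ∈ D, v ∉ e)).card := by
        rw [← Finset.card_union_of_disjoint (Finset.disjoint_filter_filter_not _ _ _),
          Finset.filter_union_filter_not_eq]
      -- part A
      have hA : (conf N V (k + 1)).filter (fun D => ∀ e ∈ D, v ∉ e) =
          conf N (V.erase v) (k + 1) := by
        ext D
        rw [Finset.mem_filter, mem_conf, mem_conf]
        constructor
        · rintro ⟨⟨hc, hk, hs⟩, hP⟩
          refine ⟨hc, hk, fun e he u hu => Finset.mem_erase.mpr ⟨?_, hs e he u hu⟩⟩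
          intro h
          exact hP e he (h ▸ hu)
        · rintro ⟨hc, hk, hs⟩
          refine ⟨⟨hc, hk, fun e he u hu => Finset.mem_of_mem_erase (hs e he u hu)⟩, ?_⟩
          intro e he hve
          exact Finset.notMem_erase v V (hs e he v hve)
      -- part B
      have hB : (conf N V (k + 1)).filter (fun D => ¬ ∀ e ∈ D, v ∉ e) =
          (V.erase v).biUnion
            (fun w => (conf N ((V.erase v).erase w) k).image (insert s(v, w))) := by
        ext D
        rw [Finset.mem_filter, mem_conf, Finset.mem_biUnion]
        constructor
        · rintro ⟨⟨⟨hdiag, hdisj⟩, hk, hs⟩, hP⟩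
          push_neg at hP
          obtain ⟨e, he, hve⟩ := hP
          obtain ⟨w, rfl⟩ := Sym2.mem_iff_exists.mp hve
          have hvw : v ≠ w := fun h => hdiag _ he (Sym2.mk_isDiag_iff.mpr h)
          have hwV : w ∈ V.erase v :=
            Finset.mem_erase.mpr ⟨fun h => hvw h.symm, hs _ he w (Sym2.mem_mk_right v w)⟩
          refine ⟨w, hwV, ?_⟩
          rw [Finset.mem_image]
          refine ⟨D.erase s(v, w), ?_, Finset.insert_erase he⟩
          rw [mem_conf]
          refine ⟨⟨fun f hf => hdiag f (Finset.mem_of_mem_erase hf),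
            fun f hf g hg hfg u hu => hdisj f (Finset.mem_of_mem_erase hf) g
              (Finset.mem_of_mem_erase hg) hfg u hu⟩,
            by rw [Finset.card_erase_of_mem he, hk]; omega, ?_⟩
          intro f hf u hu
          have hfD : f ∈ D := Finset.mem_of_mem_erase hf
          have hfne : s(v, w) ≠ f := fun h => (Finset.mem_erase.mp hf).1 h.symm
          have huV : u ∈ V := hs f hfD u hu
          have huvw : u ∉ s(v, w) := hdisj f hfD s(v, w) he (fun h => hfne h.symm) u hu
          rw [Sym2.mem_iff] at huvw
          push_neg at huvw
          exact Finset.mem_erase.mpr ⟨huvw.2, Finset.mem_erase.mpr ⟨huvw.1, huV⟩⟩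
        · rintro ⟨w, hw, hD⟩
          rw [Finset.mem_image] at hD
          obtain ⟨D', hD', rfl⟩ := hD
          rw [mem_conf] at hD'
          obtain ⟨⟨hdiag, hdisj⟩, hk, hs⟩ := hD'
          have hwv : w ≠ v := (Finset.mem_erase.mp hw).1
          have hwV : w ∈ V := Finset.mem_of_mem_erase hw
          have hvnotD' : ∀ f ∈ D', v ∉ f := by
            intro f hf hvf
            have := hs f hf v hvf
            exact Finset.notMem_erase v V (Finset.mem_of_mem_erase this)
          have hwnotD' : ∀ f ∈ D', w ∉ f := by
            intro f hf hwf
            have := hs f hf w hwf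
            exact (Finset.mem_erase.mp this).1 rfl
          have hnotmem : s(v, w) ∉ D' := fun h => hvnotD' _ h (Sym2.mem_mk_left v w)
          constructor
          · refine ⟨⟨?_, ?_⟩, ?_, ?_⟩
            · intro e he
              rcases Finset.mem_insert.mp he with rfl | he'
              · exact fun h => hwv (Sym2.mk_isDiag_iff.mp h).symm
              · exact hdiag e he'
            · intro e he f hf hef u hu
              rcases Finset.mem_insert.mp he with rfl | he' <;>
                rcases Finset.mem_insert.mp hf with rfl | hf'
              · exact absurd rfl hef
              · rw [Sym2.mem_iff] at hu
                rcases hu with rfl | rfl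
                · exact fun h => hvnotD' f hf' h
                · exact fun h => hwnotD' f hf' h
              · intro huf
                rw [Sym2.mem_iff] at huf
                rcases huf with rfl | rfl
                · exact hvnotD' e he' hu
                · exact hwnotD' e he' hu
              · exact hdisj e he' f hf' hef u hu
            · rw [Finset.card_insert_of_notMem hnotmem, hk]
            · intro e he u hu
              rcases Finset.mem_insert.mp he with rfl | he'
              · rw [Sym2.mem_iff] at hu
                rcases hu with rfl | rfl
                · exact hv
                · exact hwV
              · exact Finset.mem_of_mem_erase (Finset.mem_of_mem_erase (hs e he' u hu))
          · intro hall
            exact hall s(v, w) (Finset.mem_insert_self _ _) (Sym2.mem_mk_left v w)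
      -- cardinality of part B
      have hBcard : ((conf N V (k + 1)).filter (fun D => ¬ ∀ e ∈ D, v ∉ e)).card =
          (n + 1) * (n.choose (2 * k) * (2 * k - 1)‼) := by
        rw [hB, Finset.card_biUnion]
        · have hterm : ∀ w ∈ V.erase v,
              ((conf N ((V.erase v).erase w) k).image (insert s(v, w))).card =
                n.choose (2 * k) * (2 * k - 1)‼ := by
            intro w hw
            have hcard2 : ((V.erase v).erase w).card = n := by
              rw [Finset.card_erase_of_mem hw, Finset.card_erase_of_mem hv, hV]
              omega
            rw [Finset.card_image_of_injOn, ih n (by omega) _ hcard2 k]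
            intro D1 h1 D2 h2 h12
            simp only [Finset.coe_mem, Finset.mem_coe] at h1 h2
            have hn1 : s(v, w) ∉ D1 := by
              rw [mem_conf] at h1
              intro h
              have := h1.2.2 _ h v (Sym2.mem_mk_left v w)
              exact Finset.notMem_erase v V
                (Finset.mem_of_mem_erase this)
            have hn2 : s(v, w) ∉ D2 := by
              rw [mem_conf] at h2
              intro h
              have := h2.2.2 _ h v (Sym2.mem_mk_left v w)
              exact Finset.notMem_erase v V (Finset.mem_of_mem_erase this)
            rw [← Finset.erase_insert hn1, ← Finset.erase_insert hn2, h12]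
          rw [Finset.sum_congr rfl hterm, Finset.sum_const,
            Finset.card_erase_of_mem hv, hV, smul_eq_mul,
            show n + 2 - 1 = n + 1 from rfl]
        · intro w hw w' hw' hww'
          rw [Function.onFun, Finset.disjoint_left]
          intro D hD hD'
          rw [Finset.mem_image] at hD hD'
          obtain ⟨D1, hD1, hDeq1⟩ := hD
          obtain ⟨D2, hD2, hDeq2⟩ := hD'
          rw [mem_conf] at hD1 hD2
          have hmem : s(v, w') ∈ insert s(v, w) D1 := by
            rw [hDeq1, ← hDeq2]
            exact Finset.mem_insert_self _ _
          rcases Finset.mem_insert.mp hmem with heq | hmem'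
          · rw [Sym2.eq_iff] at heq
            rcases heq with ⟨_, h⟩ | ⟨h, _⟩
            · exact hww' h.symm
            · exact (Finset.mem_erase.mp hw).1 h.symm
          · have := hD1.2.2 _ hmem' v (Sym2.mem_mk_left v w')
            exact Finset.notMem_erase v V (Finset.mem_of_mem_erase this)
      have hAcard : ((conf N V (k + 1)).filter (fun D => ∀ e ∈ D, v ∉ e)).card =
          (n + 1).choose (2 * (k + 1)) * (2 * (k + 1) - 1)‼ := by
        rw [hA, ih (n + 1) (by omega) _
          (by rw [Finset.card_erase_of_mem hv, hV]; omega) (k + 1)]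
      rw [hsplit, hAcard, hBcard]
      rw [show 2 * (k + 1) = 2 * k + 2 by ring]
      rw [show 2 * k + 2 - 1 = 2 * k + 1 by omega]
      exact (choose_df_identity n k).symm

lemma sum_range_two_mul {M : Type*} [AddCommMonoid M] (n : ℕ) (f : ℕ → M) :
    ∑ j ∈ Finset.range (2 * n), f j = ∑ i ∈ Finset.range n, (f (2 * i) + f (2 * i + 1)) := by
  induction n with
  | zero => simp
  | succ n ih =>
    rw [Finset.sum_range_succ, ← ih, show 2 * (n + 1) = 2 * n + 1 + 1 by ring,
      Finset.sum_range_succ, Finset.sum_range_succ, add_assoc]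


end AuxLemmas

open Classical in
/-- Integral representation of the mean-field attractive monomer-dimer
partition function on the complete graph of size `N`. -/
theorem partition_integral_representation (N : ℕ) (hN : 1 ≤ N) (a b : ℝ)
    (ha : 0 < a) :
    (∑ D ∈ Finset.univ.filter (IsMDConfig N),
        ((N : ℝ) ^ D.card)⁻¹ *
          Real.exp (N * (a / 2 * monomerDensity N D ^ 2 + b * monomerDensity N D))) =
      N * Real.sqrt a / (2 * Real.pi) *
        ∫ p : ℝ × ℝ, Phi a b p.1 p.2 ^ N := by
  classical
  have hNpos : (0 : ℝ) < N := by exact_mod_cast hN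
  have hN0 : (N : ℝ) ≠ 0 := hNpos.ne'
  have hNhalf : (0 : ℝ) < (N : ℝ) / 2 := by positivity
  have hNa : (0 : ℝ) < (N : ℝ) * a / 2 := by positivity
  set pre : ℝ := N * Real.sqrt a / (2 * Real.pi) with hpre
  set F : ℕ → ℝ → ℝ := fun j x => x ^ j * rexp (-((N : ℝ) / 2) * x ^ 2) with hF
  set G : ℕ → ℝ → ℝ :=
    fun j y => rexp (a * y + b) ^ (N - j) * rexp (-((N : ℝ) * a / 2) * y ^ 2) with hG
  have hGeq : ∀ j, G j = fun y => rexp (((N - j : ℕ) : ℝ) * b) *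
      rexp (-((N : ℝ) * a / 2) * y ^ 2 + (((N - j : ℕ) : ℝ) * a) * y) := by
    intro j
    funext y
    simp only [hG]
    rw [← Real.exp_nat_mul, ← Real.exp_add, ← Real.exp_add]
    congr 1
    ring
  have hFint : ∀ j, Integrable (F j) := fun j => integrable_pow_mul_gauss hNhalf j
  have hGint : ∀ j, Integrable (G j) := by
    intro j
    rw [hGeq j]
    exact (integrable_exp_quad hNa _).const_mul _
  have hPhi : ∀ p : ℝ × ℝ, Phi a b p.1 p.2 ^ N =
      ∑ j ∈ Finset.range (N + 1), (N.choose j : ℝ) * (F j p.1 * G j p.2) := by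
    rintro ⟨x, y⟩
    simp only [Phi, hF, hG]
    rw [mul_pow, ← Real.exp_nat_mul, add_pow, Finset.sum_mul]
    refine Finset.sum_congr rfl fun j hj => ?_
    have hsplit : rexp ((N : ℝ) * (-(x ^ 2 / 2) - a * y ^ 2 / 2)) =
        rexp (-((N : ℝ) / 2) * x ^ 2) * rexp (-((N : ℝ) * a / 2) * y ^ 2) := by
      rw [← Real.exp_add]
      congr 1
      ring
    rw [hsplit]
    ring
  have hprod_int : ∀ j, Integrable (fun p : ℝ × ℝ => F j p.1 * G j p.2) := by
    intro j
    have := (hFint j).mul_prod (hGint j)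
    rwa [← MeasureTheory.Measure.volume_eq_prod] at this
  set T : ℕ → ℝ := fun j => (N.choose j : ℝ) * ((∫ x, F j x) * (∫ y, G j y)) with hT
  have hint_eq : ∫ p : ℝ × ℝ, Phi a b p.1 p.2 ^ N = ∑ j ∈ Finset.range (N + 1), T j := by
    rw [show (fun p : ℝ × ℝ => Phi a b p.1 p.2 ^ N) =
        fun p => ∑ j ∈ Finset.range (N + 1), (N.choose j : ℝ) * (F j p.1 * G j p.2) from
      funext hPhi]
    rw [MeasureTheory.integral_finset_sum _ (fun j _ => (hprod_int j).const_mul _)]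
    refine Finset.sum_congr rfl fun j _ => ?_
    rw [MeasureTheory.integral_const_mul]
    simp only [hT]
    congr 1
    rw [MeasureTheory.Measure.volume_eq_prod]
    exact MeasureTheory.integral_prod_mul (F j) (G j)
  have hext : ∑ j ∈ Finset.range (N + 1), T j = ∑ j ∈ Finset.range (2 * (N + 1)), T j := by
    refine Finset.sum_subset (Finset.range_subset_range.mpr (by omega)) fun j hj hnot => ?_
    have hj' : N < j := by
      rw [Finset.mem_range, not_lt] at hnot
      omega
    simp only [hT]
    rw [Nat.choose_eq_zero_of_lt hj']
    simp
  have hodd : ∀ k : ℕ, T (2 * k + 1) = 0 := by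
    intro k
    simp only [hT, hF]
    rw [integral_odd_pow_mul_gauss]
    simp
  -- the map to fibers
  have hmaps : ∀ D ∈ Finset.univ.filter (IsMDConfig N), D.card ∈ Finset.range (N + 1) := by
    intro D hD
    rw [Finset.mem_filter] at hD
    by_contra h
    rw [Finset.mem_range, not_lt] at h
    have hDconf : D ∈ conf N Finset.univ D.card := mem_conf.mpr ⟨hD.2, rfl, by simp⟩
    have hc := conf_card (N := N) N Finset.univ
      (by rw [Finset.card_univ, Fintype.card_fin]) D.card
    rw [Nat.choose_eq_zero_of_lt (by omega), Nat.zero_mul, Finset.card_eq_zero] at hc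
    rw [hc] at hDconf
    exact absurd hDconf (Finset.notMem_empty D)
  have hLHS : (∑ D ∈ Finset.univ.filter (IsMDConfig N),
        ((N : ℝ) ^ D.card)⁻¹ *
          Real.exp (N * (a / 2 * monomerDensity N D ^ 2 + b * monomerDensity N D))) =
      ∑ k ∈ Finset.range (N + 1), ((N.choose (2 * k) * Nat.doubleFactorial (2 * k - 1) : ℕ) : ℝ) *
        (((N : ℝ) ^ k)⁻¹ *
          rexp (N * (a / 2 * (((N : ℝ) - 2 * k) / N) ^ 2 + b * (((N : ℝ) - 2 * k) / N)))) := by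
    rw [← Finset.sum_fiberwise_of_maps_to hmaps]
    refine Finset.sum_congr rfl fun k hk => ?_
    have hset : (Finset.univ.filter (IsMDConfig N)).filter (fun D => D.card = k) =
        conf N Finset.univ k := by
      ext D
      rw [Finset.mem_filter, Finset.mem_filter, mem_conf]
      simp only [Finset.mem_univ, true_and]
      tauto
    rw [hset]
    have hconst : ∀ D ∈ conf N Finset.univ k,
        ((N : ℝ) ^ D.card)⁻¹ *
          Real.exp (N * (a / 2 * monomerDensity N D ^ 2 + b * monomerDensity N D)) =
        ((N : ℝ) ^ k)⁻¹ *
          rexp (N * (a / 2 * (((N : ℝ) - 2 * k) / N) ^ 2 + b * (((N : ℝ) - 2 * k) / N))) := by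
      intro D hD
      have hcard : D.card = k := (mem_conf.mp hD).2.1
      rw [monomerDensity, hcard]
    rw [Finset.sum_congr rfl hconst, Finset.sum_const,
      conf_card (N := N) N Finset.univ (by rw [Finset.card_univ, Fintype.card_fin]) k,
      nsmul_eq_mul]
  -- per-term identity
  have hterm : ∀ k ∈ Finset.range (N + 1),
      ((N.choose (2 * k) * Nat.doubleFactorial (2 * k - 1) : ℕ) : ℝ) *
        (((N : ℝ) ^ k)⁻¹ *
          rexp (N * (a / 2 * (((N : ℝ) - 2 * k) / N) ^ 2 + b * (((N : ℝ) - 2 * k) / N)))) =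
      pre * T (2 * k) := by
    intro k hk
    by_cases h2k : 2 * k ≤ N
    · have hIF : ∫ x, F (2 * k) x = Real.sqrt (π / ((N : ℝ) / 2)) * Nat.doubleFactorial (2 * k - 1) /
          (2 * ((N : ℝ) / 2)) ^ k := integral_even_pow_mul_gauss hNhalf k
      have hIG : ∫ y, G (2 * k) y = rexp (((N - 2 * k : ℕ) : ℝ) * b) *
          (Real.sqrt (π / ((N : ℝ) * a / 2)) *
            rexp ((((N - 2 * k : ℕ) : ℝ) * a) ^ 2 / (4 * ((N : ℝ) * a / 2)))) := by
        rw [hGeq (2 * k)]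
        rw [MeasureTheory.integral_const_mul, integral_exp_quad hNa]
      have hcast : ((N - 2 * k : ℕ) : ℝ) = (N : ℝ) - 2 * k := by
        push_cast [Nat.cast_sub h2k]
        ring
      simp only [hT]
      rw [hIF, hIG, hcast]
      rw [show (2 * ((N : ℝ) / 2)) = (N : ℝ) by ring]
      have hs1s2 : pre * (Real.sqrt (π / ((N : ℝ) / 2)) *
          Real.sqrt (π / ((N : ℝ) * a / 2))) = 1 := by
        rw [hpre, ← Real.sqrt_mul (by positivity)]
        rw [show (π / ((N : ℝ) / 2)) * (π / ((N : ℝ) * a / 2)) =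
            (2 * π / ((N : ℝ) * Real.sqrt a)) ^ 2 by
          rw [div_pow, mul_pow, mul_pow, Real.sq_sqrt ha.le]
          field_simp]
        rw [Real.sqrt_sq (by positivity)]
        field_simp
      have hexp : rexp ((N : ℝ) * (a / 2 * (((N : ℝ) - 2 * k) / N) ^ 2 +
          b * (((N : ℝ) - 2 * k) / N))) =
          rexp (((N : ℝ) - 2 * k) * b) *
            rexp ((((N : ℝ) - 2 * k) * a) ^ 2 / (4 * ((N : ℝ) * a / 2))) := by
        rw [← Real.exp_add]
        congr 1
        field_simp
        ring
      rw [hexp]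
      push_cast
      set s1 := Real.sqrt (π / ((N : ℝ) / 2))
      set s2 := Real.sqrt (π / ((N : ℝ) * a / 2))
      set e1 := rexp (((N : ℝ) - 2 * k) * b)
      set e2 := rexp ((((N : ℝ) - 2 * k) * a) ^ 2 / (4 * ((N : ℝ) * a / 2)))
      set c := (N.choose (2 * k) : ℝ)
      set df := (Nat.doubleFactorial (2 * k - 1) : ℝ)
      linear_combination (-(c * df * e1 * e2 / (N : ℝ) ^ k)) * hs1s2
    · have hz : N.choose (2 * k) = 0 := Nat.choose_eq_zero_of_lt (by omega)
      simp only [hT, hz]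
      push_cast [hz]
      simp
  calc (∑ D ∈ Finset.univ.filter (IsMDConfig N),
        ((N : ℝ) ^ D.card)⁻¹ *
          Real.exp (N * (a / 2 * monomerDensity N D ^ 2 + b * monomerDensity N D)))
      = ∑ k ∈ Finset.range (N + 1), ((N.choose (2 * k) * Nat.doubleFactorial (2 * k - 1) : ℕ) : ℝ) *
        (((N : ℝ) ^ k)⁻¹ *
          rexp (N * (a / 2 * (((N : ℝ) - 2 * k) / N) ^ 2 +
            b * (((N : ℝ) - 2 * k) / N)))) := hLHS
    _ = ∑ k ∈ Finset.range (N + 1), pre * T (2 * k) := Finset.sum_congr rfl hterm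
    _ = pre * ∑ k ∈ Finset.range (N + 1), T (2 * k) := by rw [Finset.mul_sum]
    _ = pre * ∑ k ∈ Finset.range (N + 1), (T (2 * k) + T (2 * k + 1)) := by
        congr 1
        exact Finset.sum_congr rfl fun k _ => by rw [hodd k, add_zero]
    _ = pre * ∑ j ∈ Finset.range (2 * (N + 1)), T j := by rw [sum_range_two_mul]
    _ = pre * ∑ j ∈ Finset.range (N + 1), T j := by rw [← hext]
    _ = pre * ∫ p : ℝ × ℝ, Phi a b p.1 p.2 ^ N := by rw [hint_eq]
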